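/- Let A, B ∈ ℝ^{m×n} and suppose rank(A) ≤ r. Then there exist matrices B₁, B₂ ∈ ℝ^{m×n} such that: (1) B = B₁ + B₂; (2) rank(B₁) ≤ 2r; (3) A B₂ᵀ = 0 (the m×m zero matrix) and Aᵀ B₂ = 0 (the n×n zero matrix); and (4) ⟨B₁, B₂⟩ = 0, where ⟨·,·⟩ is the Frobenius (trace) inner product. -/

import Mathlib

open scoped BigOperators
open Matrix

noncomputable section

def mInner {m n : ℕ} (A B : Matrix (Fin m) (Fin n) ℝ) : ℝ := ∑ i, ∑ j, A i j * B i j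

def frobSq {m n : ℕ} (A : Matrix (Fin m) (Fin n) ℝ) : ℝ := ∑ i, ∑ j, (A i j) ^ 2

def frobNorm {m n : ℕ} (A : Matrix (Fin m) (Fin n) ℝ) : ℝ := Real.sqrt (frobSq A)

def vInner {p : ℕ} (u v : Fin p → ℝ) : ℝ := ∑ i, u i * v i

def vNormSq {p : ℕ} (v : Fin p → ℝ) : ℝ := ∑ i, (v i) ^ 2

def vNorm {p : ℕ} (v : Fin p → ℝ) : ℝ := Real.sqrt (vNormSq v)

/-- Number of nonzero entries of a matrix. -/
def sparseCount {m n : ℕ} (S : Matrix (Fin m) (Fin n) ℝ) : ℕ :=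
  {q : Fin m × Fin n | S q.1 q.2 ≠ 0}.ncard

/-- `L` is `μ`-incoherent of rank at most `r`: `rank L ≤ r` and `L` admits a (truncated)
singular value decomposition `L = U * diagonal d * Vᵀ` with `U ∈ ℝ^{m×r}`, `V ∈ ℝ^{n×r}`
having orthonormal columns (the top `r` left/right singular vectors) whose rows satisfy
`‖Uᵀ eᵢ‖₂ ≤ √(μ r / m)` and `‖Vᵀ fⱼ‖₂ ≤ √(μ r / n)`. -/
def Incoherent {m n : ℕ} (μ : ℝ) (r : ℕ) (L : Matrix (Fin m) (Fin n) ℝ) : Prop :=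
  L.rank ≤ r ∧
  ∃ (U : Matrix (Fin m) (Fin r) ℝ) (d : Fin r → ℝ) (V : Matrix (Fin n) (Fin r) ℝ),
    Uᵀ * U = 1 ∧ Vᵀ * V = 1 ∧ (∀ k, 0 ≤ d k) ∧ L = U * Matrix.diagonal d * Vᵀ ∧
    (∀ i : Fin m, Real.sqrt (∑ k, (U i k) ^ 2) ≤ Real.sqrt (μ * r / m)) ∧
    (∀ j : Fin n, Real.sqrt (∑ k, (V j k) ^ 2) ≤ Real.sqrt (μ * r / n))

/-- The set of low-rank plus sparse matrices `LS_{m,n}(r,s,μ)`. -/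
def LS (m n r s : ℕ) (μ : ℝ) : Set (Matrix (Fin m) (Fin n) ℝ) :=
  {X | ∃ L S : Matrix (Fin m) (Fin n) ℝ,
      X = L + S ∧ Incoherent μ r L ∧ sparseCount S ≤ s}


lemma exists_symm_proj (m n : ℕ) (A : Matrix (Fin m) (Fin n) ℝ) :
    ∃ P : Matrix (Fin m) (Fin m) ℝ,
      Pᵀ = P ∧ P * P = P ∧ P * A = A ∧ P.rank ≤ A.rank := by
  classical
  let E := EuclideanSpace ℝ (Fin m)
  let R : Submodule ℝ (Fin m → ℝ) := LinearMap.range A.mulVecLin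
  let W : Submodule ℝ E := R.comap (WithLp.linearEquiv 2 ℝ (Fin m → ℝ)).toLinearMap
  let g : (Fin m → ℝ) →ₗ[ℝ] (Fin m → ℝ) :=
    (WithLp.linearEquiv 2 ℝ (Fin m → ℝ)).toLinearMap ∘ₗ (W.starProjection : E →L[ℝ] E).toLinearMap
      ∘ₗ (WithLp.linearEquiv 2 ℝ (Fin m → ℝ)).symm.toLinearMap
  have hg_mem : ∀ x : Fin m → ℝ, g x ∈ R := fun x => W.starProjection_apply_mem (WithLp.toLp 2 x)
  have hg_id : ∀ x : Fin m → ℝ, x ∈ R → g x = x := by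
    intro x hx
    have hW : WithLp.toLp 2 x ∈ W := hx
    simp [g, Submodule.starProjection_eq_self_iff.mpr hW]
  have hsym : ∀ x y : Fin m → ℝ, g x ⬝ᵥ y = x ⬝ᵥ g y := by
    intro x y
    have := W.inner_starProjection_left_eq_right (WithLp.toLp 2 y) (WithLp.toLp 2 x)
    simp only [EuclideanSpace.inner_eq_star_dotProduct, star_trivial] at this
    exact this.symm
  let P : Matrix (Fin m) (Fin m) ℝ := LinearMap.toMatrix' (g : (Fin m → ℝ) →ₗ[ℝ] (Fin m → ℝ))
  have hP_mul : ∀ x : Fin m → ℝ, P *ᵥ x = g x := by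
    intro x
    exact DFunLike.congr_fun (Matrix.toLin'_toMatrix' (g : (Fin m → ℝ) →ₗ[ℝ] (Fin m → ℝ))) x
  refine ⟨P, ?_, ?_, ?_, ?_⟩
  · ext i j
    have happ : ∀ k l : Fin m, P k l = g (Pi.single l 1) k := by
      intro k l
      rw [← hP_mul]
      simp
    have key := hsym (Pi.single i 1) (Pi.single j 1)
    simp only [dotProduct_single, single_dotProduct, mul_one, one_mul] at key
    simp only [Matrix.transpose_apply]
    rw [happ, happ, key]
  · have e : ∀ y : Fin m → ℝ, Matrix.toLin' P y = g y := fun y =>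
      DFunLike.congr_fun (Matrix.toLin'_toMatrix' (g : (Fin m → ℝ) →ₗ[ℝ] (Fin m → ℝ))) y
    apply Matrix.toLin'.injective
    rw [Matrix.toLin'_mul]
    refine LinearMap.ext fun x => ?_
    simp only [LinearMap.comp_apply]
    rw [e, e]
    exact hg_id _ (hg_mem x)
  · have e : ∀ y : Fin m → ℝ, Matrix.toLin' P y = g y := fun y =>
      DFunLike.congr_fun (Matrix.toLin'_toMatrix' (g : (Fin m → ℝ) →ₗ[ℝ] (Fin m → ℝ))) y
    apply Matrix.toLin'.injective
    rw [Matrix.toLin'_mul]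
    refine LinearMap.ext fun x => ?_
    simp only [LinearMap.comp_apply]
    rw [e]
    exact hg_id _ ⟨x, rfl⟩
  · have hle : LinearMap.range P.mulVecLin ≤ LinearMap.range A.mulVecLin := by
      rintro y ⟨x, rfl⟩
      have hx : P.mulVecLin x = g x := hP_mul x
      rw [hx]
      exact hg_mem x
    exact Submodule.finrank_mono hle

lemma matrix_rank_add_le {m n : ℕ} (X Y : Matrix (Fin m) (Fin n) ℝ) :
    (X + Y).rank ≤ X.rank + Y.rank := by
  have h : LinearMap.range (X + Y).mulVecLin ≤
      LinearMap.range X.mulVecLin ⊔ LinearMap.range Y.mulVecLin := by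
    rintro y ⟨v, rfl⟩
    refine Submodule.mem_sup.2 ⟨X *ᵥ v, ⟨v, rfl⟩, Y *ᵥ v, ⟨v, rfl⟩, ?_⟩
    simp [Matrix.add_mulVec]
  calc (X + Y).rank ≤ Module.finrank ℝ
        (LinearMap.range X.mulVecLin ⊔ LinearMap.range Y.mulVecLin : Submodule ℝ (Fin m → ℝ)) :=
        Submodule.finrank_mono h
    _ ≤ X.rank + Y.rank := Submodule.finrank_add_le_finrank_add_finrank _ _

lemma mInner_eq_trace {m n : ℕ} (X Y : Matrix (Fin m) (Fin n) ℝ) :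
    mInner X Y = (Xᵀ * Y).trace := by
  simp only [mInner, Matrix.trace, Matrix.diag, Matrix.mul_apply, Matrix.transpose_apply]
  rw [Finset.sum_comm]

/-- splitting `B` relative to a rank-`r` matrix `A` into a part of rank at
most `2r` and a part orthogonal to `A` in both row and column spaces. -/
theorem split_relative_to_lowrank
    (m n r : ℕ) (A B : Matrix (Fin m) (Fin n) ℝ) (hA : A.rank ≤ r) :
    ∃ B₁ B₂ : Matrix (Fin m) (Fin n) ℝ,
      B = B₁ + B₂ ∧
      B₁.rank ≤ 2 * r ∧
      A * B₂ᵀ = 0 ∧ Aᵀ * B₂ = 0 ∧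
      mInner B₁ B₂ = 0 := by
  classical
  obtain ⟨P, hPt, hPP, hPA, hPr⟩ := exists_symm_proj m n A
  obtain ⟨Q, hQt, hQQ, hQA, hQr⟩ := exists_symm_proj n m Aᵀ
  have hP0 : P * (1 - P) = 0 := by rw [Matrix.mul_sub, Matrix.mul_one, hPP, sub_self]
  have hQ0 : (1 - Q) * Q = 0 := by rw [Matrix.sub_mul, Matrix.one_mul, hQQ, sub_self]
  have hPP' : (1 - P) * (1 - P) = (1 - P) := by
    rw [Matrix.sub_mul, Matrix.one_mul, hP0, sub_zero]
  have hQ0' : Q * (1 - Q) = 0 := by rw [Matrix.mul_sub, Matrix.mul_one, hQQ, sub_self]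
  have hQQ' : (1 - Q) * (1 - Q) = (1 - Q) := by
    rw [Matrix.sub_mul, Matrix.one_mul, hQ0', sub_zero]
  have hAQ : A * Q = A := by
    have := congrArg Matrix.transpose hQA
    simpa [Matrix.transpose_mul, hQt] using this
  have hAtP : Aᵀ * P = Aᵀ := by
    have := congrArg Matrix.transpose hPA
    simpa [Matrix.transpose_mul, hPt] using this
  refine ⟨P * B + (1 - P) * B * Q, (1 - P) * B * (1 - Q), ?_, ?_, ?_, ?_, ?_⟩
  · have e1 : Q + (1 - Q) = (1 : Matrix (Fin n) (Fin n) ℝ) := by abel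
    have e2 : P + (1 - P) = (1 : Matrix (Fin m) (Fin m) ℝ) := by abel
    rw [add_assoc, ← Matrix.mul_add, e1, Matrix.mul_one, ← Matrix.add_mul, e2, Matrix.one_mul]
  · have h1 : (P * B).rank ≤ A.rank := le_trans (Matrix.rank_mul_le_left P B) hPr
    have h2 : ((1 - P) * B * Q).rank ≤ A.rank := by
      refine le_trans (Matrix.rank_mul_le_right ((1 - P) * B) Q) ?_
      rw [← Matrix.rank_transpose A]
      exact hQr
    calc (P * B + (1 - P) * B * Q).rank
        ≤ (P * B).rank + ((1 - P) * B * Q).rank := matrix_rank_add_le _ _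
      _ ≤ A.rank + A.rank := add_le_add h1 h2
      _ ≤ r + r := add_le_add hA hA
      _ = 2 * r := by ring
  · have hA0 : A * (1 - Q) = 0 := by rw [Matrix.mul_sub, Matrix.mul_one, hAQ, sub_self]
    simp only [Matrix.transpose_mul, Matrix.transpose_sub, Matrix.transpose_one, hPt, hQt,
      ← Matrix.mul_assoc]
    rw [hA0, Matrix.zero_mul, Matrix.zero_mul]
  · have hA0 : Aᵀ * (1 - P) = 0 := by rw [Matrix.mul_sub, Matrix.mul_one, hAtP, sub_self]
    rw [← Matrix.mul_assoc, ← Matrix.mul_assoc, hA0, Matrix.zero_mul, Matrix.zero_mul]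
  · rw [mInner_eq_trace]
    rw [Matrix.transpose_add, Matrix.add_mul, Matrix.trace_add]
    have t1 : (P * B)ᵀ * ((1 - P) * B * (1 - Q)) = 0 := by
      simp only [Matrix.transpose_mul, hPt, Matrix.mul_assoc]
      rw [← Matrix.mul_assoc P (1 - P), hP0, Matrix.zero_mul, Matrix.mul_zero]
    have t2 : (((1 - P) * B * Q)ᵀ * ((1 - P) * B * (1 - Q))).trace = 0 := by
      simp only [Matrix.transpose_mul, Matrix.transpose_sub, Matrix.transpose_one, hPt, hQt,
        Matrix.mul_assoc]
      rw [← Matrix.mul_assoc (1 - P) (1 - P), hPP']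
      rw [Matrix.trace_mul_comm]
      simp only [Matrix.mul_assoc]
      rw [hQ0, Matrix.mul_zero, Matrix.mul_zero, Matrix.mul_zero, Matrix.trace_zero]
    rw [t1, Matrix.trace_zero, t2, add_zero]
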